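/- With the notation above, TR ∘ Λ = τ: for every nonnegative Γ-invariant operator T on L²(M̂), TR(λ ∘ T ∘ λ̂) = Tr(M_ρ ∘ T ∘ M_ρ) = τ(T), where τ(T) := Tr(M_χ ∘ T ∘ M_χ) is Atiyah's trace defined by the characteristic function χ of a fundamental domain and M_f denotes multiplication by f. -/

import Mathlib

set_option maxHeartbeats 4000000
set_option synthInstance.maxHeartbeats 1000000
set_option linter.unusedSectionVars false

open MeasureTheory ContinuousLinearMap
open scoped ENNReal

/-- The trace `TR` on operators on `ℓ²(Γ, ℋ)` determined by an orthonormal basis of `ℋ`: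
`TR(T) = Σ_i ⟨T(δ_e ⊗ f_i), δ_e ⊗ f_i⟩`. -/
noncomputable def crossedTR {Γ : Type*} [Group Γ] [DecidableEq Γ]
    {H : Type*} [NormedAddCommGroup H] [InnerProductSpace ℂ H] [CompleteSpace H]
    (f : HilbertBasis ℕ ℂ H)
    (T : lp (fun _ : Γ => H) 2 →L[ℂ] lp (fun _ : Γ => H) 2) : ℝ≥0∞ :=
  ∑' i : ℕ,
    ENNReal.ofReal
      ((inner ℂ (T (lp.single 2 (1 : Γ) (f i))) (lp.single 2 (1 : Γ) (f i)) : ℂ).re)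

/-- The usual trace on `B(ℋ)` (for nonnegative operators), via an orthonormal basis. -/
noncomputable def basisTR {H : Type*} [NormedAddCommGroup H] [InnerProductSpace ℂ H]
    [CompleteSpace H] (f : HilbertBasis ℕ ℂ H) (T : H →L[ℂ] H) : ℝ≥0∞ :=
  ∑' i : ℕ, ENNReal.ofReal ((inner ℂ (T (f i)) (f i) : ℂ).re)

section AuxHilbert

variable {H : Type*} [NormedAddCommGroup H] [InnerProductSpace ℂ H] [CompleteSpace H]

/-- A family satisfying Parseval's identity. -/
def IsParseval (e : ℕ → H) : Prop :=
  ∀ y : H, ∑' i, ((‖(inner ℂ (e i) y : ℂ)‖₊ : ℝ≥0∞)) ^ 2 = (‖y‖₊ : ℝ≥0∞) ^ 2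

lemma HilbertBasis.isParseval (f : HilbertBasis ℕ ℂ H) : IsParseval (fun i => f i) := by
  intro y
  have h2 : HasSum (fun i => ‖(inner ℂ (f i) y : ℂ)‖ ^ 2) (‖y‖ ^ 2) := by
    have h3 := (f.hasSum_inner_mul_inner y y).mapL Complex.reCLM
    have e1 : (fun i => Complex.reCLM ((inner ℂ y (f i) : ℂ) * inner ℂ (f i) y))
        = fun i => ‖(inner ℂ (f i) y : ℂ)‖ ^ 2 := by
      funext i
      rw [← inner_conj_symm y (f i), RCLike.conj_mul (K := ℂ)]
      simp [← Complex.ofReal_pow]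
    have e2 : Complex.reCLM (inner ℂ y y : ℂ) = ‖y‖ ^ 2 := by
      rw [Complex.reCLM_apply, ← RCLike.re_to_complex]; exact inner_self_eq_norm_sq y
    rw [e1, e2] at h3; exact h3
  have h4 : ENNReal.ofReal (∑' i, ‖(inner ℂ (f i) y : ℂ)‖ ^ 2)
      = ∑' i, ENNReal.ofReal (‖(inner ℂ (f i) y : ℂ)‖ ^ 2) :=
    ENNReal.ofReal_tsum_of_nonneg (fun i => sq_nonneg _) h2.summable
  calc ∑' i, ((‖(inner ℂ (f i) y : ℂ)‖₊ : ℝ≥0∞)) ^ 2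
      = ∑' i, ENNReal.ofReal (‖(inner ℂ (f i) y : ℂ)‖ ^ 2) := by
        refine tsum_congr fun i => ?_
        rw [ENNReal.ofReal_pow (norm_nonneg _), ofReal_norm, enorm_eq_nnnorm]
    _ = ENNReal.ofReal (∑' i, ‖(inner ℂ (f i) y : ℂ)‖ ^ 2) := h4.symm
    _ = ENNReal.ofReal (‖y‖ ^ 2) := by rw [h2.tsum_eq]
    _ = (‖y‖₊ : ℝ≥0∞) ^ 2 := by
        rw [ENNReal.ofReal_pow (norm_nonneg _), ofReal_norm, enorm_eq_nnnorm]

lemma IsParseval.map {e : ℕ → H} (he : IsParseval e) (U : H ≃ₗᵢ[ℂ] H) :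
    IsParseval (fun i => U (e i)) := by
  intro y
  have h1 : ∀ i, ‖(inner ℂ (U (e i)) y : ℂ)‖₊ = ‖(inner ℂ (e i) (U.symm y) : ℂ)‖₊ := by
    intro i
    rw [← U.inner_map_map (e i) (U.symm y), U.apply_symm_apply]
  calc ∑' i, ((‖(inner ℂ (U (e i)) y : ℂ)‖₊ : ℝ≥0∞)) ^ 2
      = ∑' i, ((‖(inner ℂ (e i) (U.symm y) : ℂ)‖₊ : ℝ≥0∞)) ^ 2 := by
        exact tsum_congr fun i => by rw [h1 i]
    _ = (‖U.symm y‖₊ : ℝ≥0∞) ^ 2 := he (U.symm y)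
    _ = (‖y‖₊ : ℝ≥0∞) ^ 2 := by rw [U.symm.nnnorm_map]

lemma IsParseval.tsum_swap (A : H →L[ℂ] H) {e fb : ℕ → H}
    (he : IsParseval e) (hf : IsParseval fb) :
    ∑' i, (‖A (e i)‖₊ : ℝ≥0∞) ^ 2 = ∑' j, (‖(adjoint A) (fb j)‖₊ : ℝ≥0∞) ^ 2 := by
  have hnn : ∀ (i j : ℕ), ‖(inner ℂ (fb j) (A (e i)) : ℂ)‖₊
      = ‖(inner ℂ (e i) ((adjoint A) (fb j)) : ℂ)‖₊ := by
    intro i j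
    rw [← adjoint_inner_left A (e i) (fb j)]
    exact Subtype.ext (norm_inner_symm _ _)
  calc ∑' i, (‖A (e i)‖₊ : ℝ≥0∞) ^ 2
      = ∑' i, ∑' j, ((‖(inner ℂ (fb j) (A (e i)) : ℂ)‖₊ : ℝ≥0∞)) ^ 2 :=
        tsum_congr fun i => (hf (A (e i))).symm
    _ = ∑' i, ∑' j, ((‖(inner ℂ (e i) ((adjoint A) (fb j)) : ℂ)‖₊ : ℝ≥0∞)) ^ 2 :=
        tsum_congr fun i => tsum_congr fun j => by rw [hnn i j]
    _ = ∑' j, ∑' i, ((‖(inner ℂ (e i) ((adjoint A) (fb j)) : ℂ)‖₊ : ℝ≥0∞)) ^ 2 :=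
        ENNReal.tsum_comm
    _ = ∑' j, (‖(adjoint A) (fb j)‖₊ : ℝ≥0∞) ^ 2 := tsum_congr fun j => he _

lemma IsParseval.tsum_indep (A : H →L[ℂ] H) {e e' : ℕ → H}
    (he : IsParseval e) (he' : IsParseval e') :
    ∑' i, (‖A (e i)‖₊ : ℝ≥0∞) ^ 2 = ∑' i, (‖A (e' i)‖₊ : ℝ≥0∞) ^ 2 :=
  (he.tsum_swap A he').trans (he'.tsum_swap A he').symm

end AuxHilbert

section AuxLp

variable {M : Type*} [MeasurableSpace M] {μ : Measure M}

lemma nnnorm_sq_eq_lintegral (u : Lp ℂ 2 μ) :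
    (‖u‖₊ : ℝ≥0∞) ^ 2 = ∫⁻ m, (‖(u : M → ℂ) m‖₊ : ℝ≥0∞) ^ 2 ∂μ := by
  have h1 : ((‖u‖₊ : ℝ≥0∞)) = eLpNorm (u : M → ℂ) 2 μ := by
    rw [Lp.nnnorm_def]
    exact ENNReal.coe_toNNReal (Lp.eLpNorm_ne_top u)
  rw [h1, eLpNorm_eq_lintegral_rpow_enorm_toReal (two_ne_zero) (ENNReal.ofNat_ne_top)]
  rw [ENNReal.toReal_ofNat]
  rw [← ENNReal.rpow_natCast _ 2, ← ENNReal.rpow_mul]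
  norm_num
  rfl

lemma isSelfAdjoint_of_mul (B : Lp ℂ 2 μ →L[ℂ] Lp ℂ 2 μ) (w : M → ℂ)
    (hw : ∀ η : Lp ℂ 2 μ, (B η : M → ℂ) =ᵐ[μ] fun m => w m * (η : M → ℂ) m)
    (hwr : ∀ m, (starRingEnd ℂ) (w m) = w m) : IsSelfAdjoint B := by
  rw [ContinuousLinearMap.isSelfAdjoint_iff']
  symm
  rw [ContinuousLinearMap.eq_adjoint_iff]
  intro x y
  rw [MeasureTheory.L2.inner_def, MeasureTheory.L2.inner_def]
  refine integral_congr_ae ?_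
  filter_upwards [hw x, hw y] with m h1 h2
  simp only [RCLike.inner_apply, h1, h2, map_mul, hwr m]
  ring

end AuxLp

section IndCLM
variable {M : Type*} [MeasurableSpace M] (μ : Measure M)

/-- Multiplication by the indicator function of a measurable set, as a
continuous linear map on `L²`. -/
noncomputable def indCLM (V : Set M) (hV : MeasurableSet V) :
    Lp ℂ 2 μ →L[ℂ] Lp ℂ 2 μ := by
  refine LinearMap.mkContinuous
    { toFun := fun η => MemLp.toLp (V.indicator (η : M → ℂ)) ((Lp.memLp η).indicator hV)
      map_add' := ?_, map_smul' := ?_ } 1 ?_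
  · intro x y
    apply Lp.ext
    filter_upwards [MemLp.coeFn_toLp (f := V.indicator (((x + y : Lp ℂ 2 μ)) : M → ℂ)) ((Lp.memLp (x + y)).indicator hV),
      MemLp.coeFn_toLp (f := V.indicator (x : M → ℂ)) ((Lp.memLp x).indicator hV),
      MemLp.coeFn_toLp (f := V.indicator (y : M → ℂ)) ((Lp.memLp y).indicator hV),
      Lp.coeFn_add (MemLp.toLp (V.indicator (x : M → ℂ)) ((Lp.memLp x).indicator hV))
        (MemLp.toLp (V.indicator (y : M → ℂ)) ((Lp.memLp y).indicator hV)),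
      Lp.coeFn_add x y] with m h1 h2 h3 h4 h5
    rw [h1, h4]
    simp only [Pi.add_apply]
    rw [h2, h3]
    by_cases hm : m ∈ V
    · rw [Set.indicator_of_mem hm, Set.indicator_of_mem hm, Set.indicator_of_mem hm, h5]
      simp
    · rw [Set.indicator_of_notMem hm, Set.indicator_of_notMem hm,
        Set.indicator_of_notMem hm]
      simp
  · intro c x
    apply Lp.ext
    filter_upwards [MemLp.coeFn_toLp (f := V.indicator (((c • x : Lp ℂ 2 μ)) : M → ℂ)) ((Lp.memLp (c • x)).indicator hV),
      MemLp.coeFn_toLp (f := V.indicator (x : M → ℂ)) ((Lp.memLp x).indicator hV),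
      Lp.coeFn_smul c (MemLp.toLp (V.indicator (x : M → ℂ)) ((Lp.memLp x).indicator hV)),
      Lp.coeFn_smul c x] with m h1 h2 h3 h4
    rw [h1]
    simp only [RingHom.id_apply]
    rw [h3]
    simp only [Pi.smul_apply]
    rw [h2]
    by_cases hm : m ∈ V
    · rw [Set.indicator_of_mem hm, Set.indicator_of_mem hm, h4]
      simp
    · rw [Set.indicator_of_notMem hm, Set.indicator_of_notMem hm]
      simp
  · intro x
    simp only [LinearMap.coe_mk, AddHom.coe_mk, one_mul]
    rw [Lp.norm_toLp]
    refine ENNReal.toReal_le_of_le_ofReal (norm_nonneg _) ?_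
    have h : eLpNorm (V.indicator (x : M → ℂ)) 2 μ ≤ eLpNorm (x : M → ℂ) 2 μ :=
      eLpNorm_mono_ae (Filter.Eventually.of_forall fun m => norm_indicator_le_norm_self _ _)
    refine h.trans ?_
    rw [Lp.norm_def, ENNReal.ofReal_toReal (Lp.eLpNorm_ne_top x)]

lemma indCLM_coeFn (V : Set M) (hV : MeasurableSet V) (η : Lp ℂ 2 μ) :
    ((indCLM μ V hV η : Lp ℂ 2 μ) : M → ℂ) =ᵐ[μ]
      fun m => Set.indicator V (fun _ => (1 : ℂ)) m * (η : M → ℂ) m := by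
  filter_upwards [MemLp.coeFn_toLp (f := V.indicator (η : M → ℂ)) ((Lp.memLp η).indicator hV)] with m h1
  have : (indCLM μ V hV η : M → ℂ) m = V.indicator (η : M → ℂ) m := h1
  rw [this]
  by_cases hm : m ∈ V <;> simp [Set.indicator_apply, hm]

end IndCLM

theorem TR_comp_Lambda_eq_tau {Γ : Type*} [Group Γ] [Countable Γ] [DecidableEq Γ]
    {M : Type*} [MeasurableSpace M] (μ : Measure M)
    (a : Γ → M → M)
    (hmp : ∀ g : Γ, MeasurePreserving (a g) μ μ)
    (hone : ∀ m, a 1 m = m)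
    (hmulact : ∀ (g h : Γ) (m : M), a (g * h) m = a h (a g m))
    (hfree : ∀ g : Γ, g ≠ 1 → ∀ m, a g m ≠ m)
    -- the fundamental domain Û with characteristic function χ
    (Uf : Set M) (hUf : MeasurableSet Uf)
    (hfund : ∀ᵐ m ∂μ, ∃! g : Γ, a g m ∈ Uf)
    -- the cutoff ρ
    (ρ : M → ℝ) (hρ : ∀ m, ρ m ∈ Set.Icc (0 : ℝ) 1)
    (hsum : ∀ m, ∑' g : Γ, (ρ (a g m)) ^ 2 = 1)
    -- the unitaries induced by the action
    (UL : Γ → (Lp ℂ 2 μ ≃ₗᵢ[ℂ] Lp ℂ 2 μ))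
    (hUL : ∀ (g : Γ) (η : Lp ℂ 2 μ),
      ((UL g η : Lp ℂ 2 μ) : M → ℂ) =ᵐ[μ] fun m => (η : M → ℂ) (a g m))
    -- λ and λ̂
    (lam : Lp ℂ 2 μ →L[ℂ] lp (fun _ : Γ => Lp ℂ 2 μ) 2)
    (hlam : ∀ (η : Lp ℂ 2 μ) (g : Γ),
      (((lam η : lp (fun _ : Γ => Lp ℂ 2 μ) 2) : ∀ _ : Γ, Lp ℂ 2 μ) g : M → ℂ)
        =ᵐ[μ] fun m => (ρ m : ℂ) * (η : M → ℂ) (a g m))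
    (hat : lp (fun _ : Γ => Lp ℂ 2 μ) 2 →L[ℂ] Lp ℂ 2 μ)
    (hhat : hat = ContinuousLinearMap.adjoint lam)
    -- the multiplication operators M_χ and M_ρ
    (Mchi : Lp ℂ 2 μ →L[ℂ] Lp ℂ 2 μ)
    (hMchi : ∀ η : Lp ℂ 2 μ,
      ((Mchi η : Lp ℂ 2 μ) : M → ℂ) =ᵐ[μ]
        fun m => (Set.indicator Uf (fun _ => (1 : ℂ)) m) * (η : M → ℂ) m)
    (Mrho : Lp ℂ 2 μ →L[ℂ] Lp ℂ 2 μ)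
    (hMrho : ∀ η : Lp ℂ 2 μ,
      ((Mrho η : Lp ℂ 2 μ) : M → ℂ) =ᵐ[μ] fun m => (ρ m : ℂ) * (η : M → ℂ) m)
    -- an orthonormal basis of L²(M̂)
    (f : HilbertBasis ℕ ℂ (Lp ℂ 2 μ)) :
    ∀ T : Lp ℂ 2 μ →L[ℂ] Lp ℂ 2 μ,
      (∀ (g : Γ) (η : Lp ℂ 2 μ), T (UL g η) = UL g (T η)) →
      T.IsPositive →
      crossedTR f (lam ∘L T ∘L hat) = basisTR f (Mrho ∘L T ∘L Mrho) ∧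
      basisTR f (Mrho ∘L T ∘L Mrho) = basisTR f (Mchi ∘L T ∘L Mchi) := by
  intro T hTcomm hTpos
  classical
  -- Basic facts about the action
  have hgg : ∀ (g : Γ) (m : M), a g⁻¹ (a g m) = m := fun g m => by
    rw [← hmulact g g⁻¹ m, mul_inv_cancel, hone]
  have hgg' : ∀ (g : Γ) (m : M), a g (a g⁻¹ m) = m := fun g m => by
    rw [← hmulact g⁻¹ g m, inv_mul_cancel, hone]
  -- The unitaries and their inverses
  have hULinv : ∀ (g : Γ) (η : Lp ℂ 2 μ), UL g⁻¹ (UL g η) = η := by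
    intro g η
    apply Lp.ext
    have h2 : (((UL g η : Lp ℂ 2 μ) : M → ℂ) ∘ (a g⁻¹)) =ᵐ[μ]
        ((fun m => (η : M → ℂ) (a g m)) ∘ (a g⁻¹)) :=
      (hmp g⁻¹).quasiMeasurePreserving.ae_eq (hUL g η)
    filter_upwards [hUL g⁻¹ (UL g η), h2] with m hm1 hm2
    rw [hm1]
    have h3 : ((UL g η : Lp ℂ 2 μ) : M → ℂ) (a g⁻¹ m)
        = (η : M → ℂ) (a g (a g⁻¹ m)) := hm2
    rw [h3, hgg' g m]
  have hULinv' : ∀ (g : Γ) (η : Lp ℂ 2 μ), UL g (UL g⁻¹ η) = η := by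
    intro g η
    have := hULinv g⁻¹ η
    rwa [inv_inv] at this
  -- The unitaries as continuous linear maps
  set Ucl : Γ → (Lp ℂ 2 μ →L[ℂ] Lp ℂ 2 μ) :=
    fun g => ((UL g).toContinuousLinearEquiv : Lp ℂ 2 μ →L[ℂ] Lp ℂ 2 μ) with hUcldef
  have hUclapp : ∀ (g : Γ) (η : Lp ℂ 2 μ), Ucl g η = UL g η := fun _ _ => rfl
  have hUadj : ∀ g : Γ, adjoint (Ucl g) = Ucl g⁻¹ := by
    intro g
    symm
    rw [ContinuousLinearMap.eq_adjoint_iff]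
    intro x y
    show (inner ℂ ((UL g⁻¹) x) y : ℂ) = inner ℂ x ((UL g) y)
    calc (inner ℂ ((UL g⁻¹) x) y : ℂ)
        = inner ℂ (UL g (UL g⁻¹ x)) (UL g y) := ((UL g).inner_map_map _ _).symm
      _ = inner ℂ x ((UL g) y) := by rw [hULinv' g x]
  -- The square root of T
  have hTnn : (0 : Lp ℂ 2 μ →L[ℂ] Lp ℂ 2 μ) ≤ T := T.nonneg_iff_isPositive.mpr hTpos
  haveI : NonUnitalContinuousFunctionalCalculus ℝ (Lp ℂ 2 μ →L[ℂ] Lp ℂ 2 μ) IsSelfAdjoint :=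
    IsSelfAdjoint.instNonUnitalContinuousFunctionalCalculus
  haveI : ContinuousFunctionalCalculus ℝ (Lp ℂ 2 μ →L[ℂ] Lp ℂ 2 μ) IsSelfAdjoint :=
    IsSelfAdjoint.instContinuousFunctionalCalculus
  set S : Lp ℂ 2 μ →L[ℂ] Lp ℂ 2 μ := CFC.sqrt T with hSdef
  have hSnn : (0 : Lp ℂ 2 μ →L[ℂ] Lp ℂ 2 μ) ≤ S := CFC.sqrt_nonneg T
  have hSpos : S.IsPositive := S.nonneg_iff_isPositive.mp hSnn
  have hSsa : IsSelfAdjoint S := hSpos.isSelfAdjoint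
  have hSS : S ∘L S = T := CFC.sqrt_mul_sqrt_self T hTnn
  -- S commutes with the unitaries
  have hSU : ∀ (g : Γ) (η : Lp ℂ 2 μ), S (UL g η) = UL g (S η) := by
    intro g η
    have hbpos : (Ucl g⁻¹ ∘L S ∘L Ucl g).IsPositive := by
      have h := hSpos.conj_adjoint (Ucl g⁻¹)
      rwa [hUadj g⁻¹, inv_inv] at h
    have hbb : (Ucl g⁻¹ ∘L S ∘L Ucl g) * (Ucl g⁻¹ ∘L S ∘L Ucl g) = T := by
      apply ContinuousLinearMap.ext; intro ξ
      simp only [ContinuousLinearMap.mul_apply, ContinuousLinearMap.comp_apply, hUclapp]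
      rw [hULinv' g]
      have h1 := ContinuousLinearMap.ext_iff.mp hSS (UL g ξ)
      simp only [ContinuousLinearMap.comp_apply] at h1
      rw [h1, hTcomm g ξ, hULinv g]
    have hbe : S = Ucl g⁻¹ ∘L S ∘L Ucl g := by
      rw [hSdef]
      exact CFC.sqrt_unique hbb ((Ucl g⁻¹ ∘L S ∘L Ucl g).nonneg_iff_isPositive.mpr hbpos)
    have h2 : S η = UL g⁻¹ (S (UL g η)) := by
      conv_lhs => rw [hbe]
      simp only [ContinuousLinearMap.comp_apply, hUclapp]
    rw [h2, hULinv' g]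
  -- Self-adjointness of the multiplication operators
  have hMrsa : IsSelfAdjoint Mrho :=
    isSelfAdjoint_of_mul Mrho (fun m => (ρ m : ℂ)) hMrho fun m => Complex.conj_ofReal _
  have hMcsa : IsSelfAdjoint Mchi :=
    isSelfAdjoint_of_mul Mchi _ hMchi fun m => by
      by_cases h : m ∈ Uf
      · rw [Set.indicator_of_mem h]; simp
      · rw [Set.indicator_of_notMem h]; simp
  -- The adjoint of lam sends δ₁ ⊗ v to Mρ v
  have hhat_single : ∀ v : Lp ℂ 2 μ, hat (lp.single 2 (1 : Γ) v) = Mrho v := by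
    intro v
    rw [hhat]
    apply ext_inner_right ℂ
    intro η
    rw [adjoint_inner_left, lp.inner_single_left]
    have h1 : (((lam η : lp (fun _ : Γ => Lp ℂ 2 μ) 2) : ∀ _ : Γ, Lp ℂ 2 μ) (1 : Γ))
        = Mrho η := by
      apply Lp.ext
      filter_upwards [hlam η 1, hMrho η] with m hm1 hm2
      rw [hm1, hm2, hone]
    rw [h1]
    calc (inner ℂ v (Mrho η) : ℂ) = inner ℂ (adjoint Mrho v) η := (adjoint_inner_left _ _ _).symm
      _ = inner ℂ (Mrho v) η := by rw [hMrsa.adjoint_eq]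
  have hsaInner : ∀ C : Lp ℂ 2 μ →L[ℂ] Lp ℂ 2 μ, IsSelfAdjoint C →
      ∀ u w : Lp ℂ 2 μ, (inner ℂ (C u) w : ℂ) = inner ℂ u (C w) := by
    intro C hC u w
    conv_lhs => rw [← hC.adjoint_eq]
    exact adjoint_inner_left _ _ _
  -- Key reduction of basisTR for conjugations by selfadjoint operators
  have hkey : ∀ B : Lp ℂ 2 μ →L[ℂ] Lp ℂ 2 μ, IsSelfAdjoint B →
      basisTR f (B ∘L T ∘L B)
        = ∑' j : ℕ, ∫⁻ m, ((‖((B (S (f j)) : Lp ℂ 2 μ) : M → ℂ) m‖₊ : ℝ≥0∞)) ^ 2 ∂μ := by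
    intro B hB
    have hP : IsParseval (fun i => f i) := f.isParseval
    have hterm : ∀ i : ℕ, ENNReal.ofReal ((inner ℂ ((B ∘L T ∘L B) (f i)) (f i) : ℂ).re)
        = (‖(S ∘L B) (f i)‖₊ : ℝ≥0∞) ^ 2 := by
      intro i
      have h1 : (inner ℂ ((B ∘L T ∘L B) (f i)) (f i) : ℂ)
          = inner ℂ (S (B (f i))) (S (B (f i))) := by
        calc (inner ℂ ((B ∘L T ∘L B) (f i)) (f i) : ℂ)
            = inner ℂ (B (T (B (f i)))) (f i) := rfl
          _ = inner ℂ (T (B (f i))) (B (f i)) := hsaInner B hB _ _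
          _ = inner ℂ (S (S (B (f i)))) (B (f i)) := by
              have h2 := ContinuousLinearMap.ext_iff.mp hSS (B (f i))
              simp only [ContinuousLinearMap.comp_apply] at h2
              rw [h2]
          _ = inner ℂ (S (B (f i))) (S (B (f i))) := hsaInner S hSsa _ _
      rw [h1]
      have h3 : ((inner ℂ (S (B (f i))) (S (B (f i))) : ℂ)).re = ‖S (B (f i))‖ ^ 2 := by
        rw [← RCLike.re_to_complex]; exact inner_self_eq_norm_sq _
      rw [h3, ENNReal.ofReal_pow (norm_nonneg _), ofReal_norm, enorm_eq_nnnorm]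
      rfl
    calc basisTR f (B ∘L T ∘L B)
        = ∑' i : ℕ, (‖(S ∘L B) (f i)‖₊ : ℝ≥0∞) ^ 2 := tsum_congr hterm
      _ = ∑' j : ℕ, (‖(adjoint (S ∘L B)) (f j)‖₊ : ℝ≥0∞) ^ 2 := hP.tsum_swap (S ∘L B) hP
      _ = ∑' j : ℕ, (‖(B ∘L S) (f j)‖₊ : ℝ≥0∞) ^ 2 := by
          rw [adjoint_comp, hB.adjoint_eq, hSsa.adjoint_eq]
      _ = ∑' j : ℕ, ∫⁻ m, ((‖((B (S (f j)) : Lp ℂ 2 μ) : M → ℂ) m‖₊ : ℝ≥0∞)) ^ 2 ∂μ :=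
          tsum_congr fun j => nnnorm_sq_eq_lintegral (B (S (f j)))
  constructor
  · -- first equality
    unfold crossedTR basisTR
    refine tsum_congr fun i => ?_
    congr 1
    have hx : hat (lp.single 2 (1 : Γ) (f i)) = Mrho (f i) := hhat_single (f i)
    have h1 : (lam ∘L T ∘L hat) (lp.single 2 (1 : Γ) (f i)) = lam (T (Mrho (f i))) := by
      simp only [ContinuousLinearMap.comp_apply, hx]
    rw [h1]
    have h2 : (inner ℂ (lam (T (Mrho (f i)))) (lp.single 2 (1 : Γ) (f i)) : ℂ)
        = inner ℂ (T (Mrho (f i))) (Mrho (f i)) := by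
      conv_lhs => rw [← adjoint_adjoint lam]
      rw [adjoint_inner_left, ← hhat, hx]
    rw [h2]
    have h3 : (inner ℂ ((Mrho ∘L T ∘L Mrho) (f i)) (f i) : ℂ)
        = inner ℂ (T (Mrho (f i))) (Mrho (f i)) := by
      show (inner ℂ (Mrho (T (Mrho (f i)))) (f i) : ℂ) = _
      exact hsaInner Mrho hMrsa _ _
    rw [h3]
  · -- second equality
    rw [hkey Mrho hMrsa, hkey Mchi hMcsa]
    -- measurable preimages of the fundamental domain
    have hVg : ∀ g : Γ, MeasurableSet (a g⁻¹ ⁻¹' Uf) := fun g => (hmp g⁻¹).measurable hUf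
    -- a.e. description of Mρ (UL g⁻¹ u) and UL g (Mρ (UL g⁻¹ u))
    have hz : ∀ (g : Γ) (u : Lp ℂ 2 μ),
        ((Mrho (UL g⁻¹ u) : Lp ℂ 2 μ) : M → ℂ)
          =ᵐ[μ] fun m => (ρ m : ℂ) * (u : M → ℂ) (a g⁻¹ m) := by
      intro g u
      filter_upwards [hMrho (UL g⁻¹ u), hUL g⁻¹ u] with m h1 h2
      rw [h1, h2]
    have hw : ∀ (g : Γ) (u : Lp ℂ 2 μ),
        ((UL g (Mrho (UL g⁻¹ u)) : Lp ℂ 2 μ) : M → ℂ)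
          =ᵐ[μ] fun m => (ρ (a g m) : ℂ) * (u : M → ℂ) m := by
      intro g u
      have h2 : (((Mrho (UL g⁻¹ u) : Lp ℂ 2 μ) : M → ℂ) ∘ (a g)) =ᵐ[μ]
          ((fun m => (ρ m : ℂ) * (u : M → ℂ) (a g⁻¹ m)) ∘ (a g)) :=
        (hmp g).quasiMeasurePreserving.ae_eq (hz g u)
      filter_upwards [hUL g (Mrho (UL g⁻¹ u)), h2] with m h3 h4
      rw [h3]
      have h5 : ((Mrho (UL g⁻¹ u) : Lp ℂ 2 μ) : M → ℂ) (a g m)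
          = (ρ (a g m) : ℂ) * (u : M → ℂ) (a g⁻¹ (a g m)) := h4
      rw [h5, hgg g m]
    -- squared norms of scalar multiples
    have hnnmul : ∀ r : ℝ, 0 ≤ r → ∀ z : ℂ,
        ((‖(r : ℂ) * z‖₊ : ℝ≥0∞)) ^ 2 = ENNReal.ofReal (r ^ 2) * (‖z‖₊ : ℝ≥0∞) ^ 2 := by
      intro r hr z
      rw [nnnorm_mul, ENNReal.coe_mul, mul_pow]
      congr 1
      rw [Complex.nnnorm_real, ← enorm_eq_nnnorm, Real.enorm_eq_ofReal hr, ← ENNReal.ofReal_pow hr]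
    -- the weight functions
    set G1 : Γ → Lp ℂ 2 μ → M → ℝ≥0∞ := fun g u m =>
      Uf.indicator (fun _ => (1 : ℝ≥0∞)) m * (‖(u : M → ℂ) m‖₊ : ℝ≥0∞) ^ 2
        * ENNReal.ofReal (ρ (a g m) ^ 2) with hG1
    have hGae : ∀ (g : Γ) (u : Lp ℂ 2 μ), G1 g u =ᵐ[μ] fun m =>
        Uf.indicator (fun _ => (1 : ℝ≥0∞)) m
          * (‖((UL g (Mrho (UL g⁻¹ u)) : Lp ℂ 2 μ) : M → ℂ) m‖₊ : ℝ≥0∞) ^ 2 := by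
      intro g u
      filter_upwards [hw g u] with m hm
      rw [hG1]
      simp only
      rw [hm, hnnmul (ρ (a g m)) (hρ (a g m)).1]
      ring
    have hGmeas : ∀ (g : Γ) (u : Lp ℂ 2 μ), AEMeasurable (G1 g u) μ := by
      intro g u
      refine AEMeasurable.congr ?_ (hGae g u).symm
      exact ((measurable_one.indicator hUf).aemeasurable).mul
        ((Lp.aestronglyMeasurable (UL g (Mrho (UL g⁻¹ u)))).enorm.pow_const 2)
    -- sum of the translated cutoffs
    have hsum2 : ∀ m : M, ∑' g : Γ, ENNReal.ofReal (ρ (a g m) ^ 2) = 1 := by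
      intro m
      have hsummable : Summable fun g : Γ => ρ (a g m) ^ 2 := by
        by_contra hns
        have := tsum_eq_zero_of_not_summable hns
        rw [hsum m] at this
        exact one_ne_zero this
      rw [← ENNReal.ofReal_tsum_of_nonneg (fun g => sq_nonneg _) hsummable, hsum m,
        ENNReal.ofReal_one]
    -- Step A : insert the partition of unity
    have stepA : ∀ u : Lp ℂ 2 μ,
        ∫⁻ m, Uf.indicator (fun _ => (1 : ℝ≥0∞)) m * (‖(u : M → ℂ) m‖₊ : ℝ≥0∞) ^ 2 ∂μ
          = ∑' g : Γ, ∫⁻ m, G1 g u m ∂μ := by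
      intro u
      rw [← lintegral_tsum fun g => hGmeas g u]
      refine lintegral_congr fun m => ?_
      rw [hG1]
      simp only
      rw [ENNReal.tsum_mul_left, hsum2 m, mul_one]
    -- Step B : change of variables
    have stepB : ∀ (g : Γ) (u : Lp ℂ 2 μ), ∫⁻ m, G1 g u m ∂μ
        = ∫⁻ m, ((a g⁻¹ ⁻¹' Uf).indicator (fun _ => (1 : ℝ≥0∞)) m)
            * (‖((Mrho (UL g⁻¹ u) : Lp ℂ 2 μ) : M → ℂ) m‖₊ : ℝ≥0∞) ^ 2 ∂μ := by
      intro g u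
      have hmap : μ.map (a g⁻¹) = μ := (hmp g⁻¹).map_eq
      have h0 : ∫⁻ m, G1 g u m ∂μ = ∫⁻ m, G1 g u (a g⁻¹ m) ∂μ := by
        conv_lhs => rw [← hmap]
        exact lintegral_map' (by rw [hmap]; exact hGmeas g u)
          (hmp g⁻¹).measurable.aemeasurable
      rw [h0]
      refine lintegral_congr_ae ?_
      filter_upwards [hz g u] with m hm
      have h1 : (‖((Mrho (UL g⁻¹ u) : Lp ℂ 2 μ) : M → ℂ) m‖₊ : ℝ≥0∞) ^ 2
          = ENNReal.ofReal (ρ m ^ 2) * (‖(u : M → ℂ) (a g⁻¹ m)‖₊ : ℝ≥0∞) ^ 2 := by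
        rw [hm]
        exact hnnmul (ρ m) (hρ m).1 _
      rw [h1, hG1]
      simp only
      rw [hgg' g m]
      have h2 : Uf.indicator (fun _ => (1 : ℝ≥0∞)) (a g⁻¹ m)
          = (a g⁻¹ ⁻¹' Uf).indicator (fun _ => (1 : ℝ≥0∞)) m := by
        by_cases hmem : a g⁻¹ m ∈ Uf
        · rw [Set.indicator_of_mem hmem,
            Set.indicator_of_mem (show m ∈ a g⁻¹ ⁻¹' Uf from hmem)]
        · rw [Set.indicator_of_notMem hmem,
            Set.indicator_of_notMem (show m ∉ a g⁻¹ ⁻¹' Uf from hmem)]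
      rw [h2]
      ring
    -- indicator-weighted integrals as norms
    have hIco : ∀ (V : Set M) (hV : MeasurableSet V) (u : Lp ℂ 2 μ),
        ∫⁻ m, V.indicator (fun _ => (1 : ℝ≥0∞)) m * (‖(u : M → ℂ) m‖₊ : ℝ≥0∞) ^ 2 ∂μ
          = (‖indCLM μ V hV u‖₊ : ℝ≥0∞) ^ 2 := by
      intro V hV u
      rw [nnnorm_sq_eq_lintegral]
      refine lintegral_congr_ae ?_
      filter_upwards [indCLM_coeFn μ V hV u] with m hm
      rw [hm]
      by_cases hmem : m ∈ V
      · rw [Set.indicator_of_mem hmem, Set.indicator_of_mem hmem]; simp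
      · rw [Set.indicator_of_notMem hmem, Set.indicator_of_notMem hmem]; simp
    -- Step C : change of orthonormal basis
    have stepC : ∀ g : Γ,
        (∑' j : ℕ, ∫⁻ m, ((a g⁻¹ ⁻¹' Uf).indicator (fun _ => (1 : ℝ≥0∞)) m)
            * (‖((Mrho (UL g⁻¹ (S (f j))) : Lp ℂ 2 μ) : M → ℂ) m‖₊ : ℝ≥0∞) ^ 2 ∂μ)
        = ∑' j : ℕ, ∫⁻ m, ((a g⁻¹ ⁻¹' Uf).indicator (fun _ => (1 : ℝ≥0∞)) m)
            * (‖((Mrho (S (f j)) : Lp ℂ 2 μ) : M → ℂ) m‖₊ : ℝ≥0∞) ^ 2 ∂μ := by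
      intro g
      set A : Lp ℂ 2 μ →L[ℂ] Lp ℂ 2 μ := indCLM μ _ (hVg g) ∘L (Mrho ∘L S) with hA
      have hP : IsParseval (fun i => f i) := f.isParseval
      have hPe : IsParseval (fun j => UL g⁻¹ (f j)) := hP.map (UL g⁻¹)
      calc (∑' j : ℕ, ∫⁻ m, ((a g⁻¹ ⁻¹' Uf).indicator (fun _ => (1 : ℝ≥0∞)) m)
            * (‖((Mrho (UL g⁻¹ (S (f j))) : Lp ℂ 2 μ) : M → ℂ) m‖₊ : ℝ≥0∞) ^ 2 ∂μ)
          = ∑' j : ℕ, (‖A (UL g⁻¹ (f j))‖₊ : ℝ≥0∞) ^ 2 := by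
            refine tsum_congr fun j => ?_
            rw [hIco _ (hVg g) (Mrho (UL g⁻¹ (S (f j))))]
            congr 2
            rw [hA]
            simp only [ContinuousLinearMap.comp_apply]
            rw [hSU g⁻¹ (f j)]
        _ = ∑' j : ℕ, (‖A (f j)‖₊ : ℝ≥0∞) ^ 2 := IsParseval.tsum_indep A hPe hP
        _ = ∑' j : ℕ, ∫⁻ m, ((a g⁻¹ ⁻¹' Uf).indicator (fun _ => (1 : ℝ≥0∞)) m)
            * (‖((Mrho (S (f j)) : Lp ℂ 2 μ) : M → ℂ) m‖₊ : ℝ≥0∞) ^ 2 ∂μ := by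
            refine tsum_congr fun j => ?_
            rw [hIco _ (hVg g) (Mrho (S (f j)))]
            congr 2
    -- a.e. exactly one translate lies in the fundamental domain
    have hfund' : ∀ᵐ m ∂μ,
        ∑' g : Γ, (a g⁻¹ ⁻¹' Uf).indicator (fun _ => (1 : ℝ≥0∞)) m = 1 := by
      filter_upwards [hfund] with m hm
      obtain ⟨g₀, hg₀, hu⟩ := hm
      rw [tsum_eq_single g₀⁻¹ ?_]
      · rw [Set.indicator_of_mem (show m ∈ a g₀⁻¹⁻¹ ⁻¹' Uf by
          rw [inv_inv]; exact hg₀)]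
      · intro g hg
        rw [Set.indicator_of_notMem]
        intro hmem
        exact hg (by rw [← hu g⁻¹ hmem, inv_inv])
    -- Step D : remove the partition again
    have stepD : ∀ u : Lp ℂ 2 μ,
        (∑' g : Γ, ∫⁻ m, ((a g⁻¹ ⁻¹' Uf).indicator (fun _ => (1 : ℝ≥0∞)) m)
            * (‖(u : M → ℂ) m‖₊ : ℝ≥0∞) ^ 2 ∂μ)
          = ∫⁻ m, (‖(u : M → ℂ) m‖₊ : ℝ≥0∞) ^ 2 ∂μ := by
      intro u
      have hmeas : ∀ g : Γ, AEMeasurable (fun m =>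
          ((a g⁻¹ ⁻¹' Uf).indicator (fun _ => (1 : ℝ≥0∞)) m)
            * (‖(u : M → ℂ) m‖₊ : ℝ≥0∞) ^ 2) μ := fun g =>
        ((measurable_one.indicator (hVg g)).aemeasurable.mul
          ((Lp.aestronglyMeasurable u).enorm.pow_const 2))
      rw [← lintegral_tsum hmeas]
      refine lintegral_congr_ae ?_
      filter_upwards [hfund'] with m hm
      rw [ENNReal.tsum_mul_right, hm, one_mul]
    -- a.e. description of Mχ v
    have hchiInd : ∀ u : Lp ℂ 2 μ,
        ∫⁻ m, ((‖((Mchi u : Lp ℂ 2 μ) : M → ℂ) m‖₊ : ℝ≥0∞)) ^ 2 ∂μ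
          = ∫⁻ m, Uf.indicator (fun _ => (1 : ℝ≥0∞)) m * (‖(u : M → ℂ) m‖₊ : ℝ≥0∞) ^ 2 ∂μ := by
      intro u
      refine lintegral_congr_ae ?_
      filter_upwards [hMchi u] with m hm
      rw [hm]
      by_cases hmem : m ∈ Uf
      · rw [Set.indicator_of_mem hmem, Set.indicator_of_mem hmem]; simp
      · rw [Set.indicator_of_notMem hmem, Set.indicator_of_notMem hmem]; simp
    -- assemble
    symm
    calc (∑' j : ℕ, ∫⁻ m, ((‖((Mchi (S (f j)) : Lp ℂ 2 μ) : M → ℂ) m‖₊ : ℝ≥0∞)) ^ 2 ∂μ)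
        = ∑' j : ℕ, ∫⁻ m, Uf.indicator (fun _ => (1 : ℝ≥0∞)) m
            * (‖((S (f j) : Lp ℂ 2 μ) : M → ℂ) m‖₊ : ℝ≥0∞) ^ 2 ∂μ :=
          tsum_congr fun j => hchiInd (S (f j))
      _ = ∑' j : ℕ, ∑' g : Γ, ∫⁻ m, G1 g (S (f j)) m ∂μ :=
          tsum_congr fun j => stepA (S (f j))
      _ = ∑' g : Γ, ∑' j : ℕ, ∫⁻ m, G1 g (S (f j)) m ∂μ := ENNReal.tsum_comm
      _ = ∑' g : Γ, ∑' j : ℕ, ∫⁻ m, ((a g⁻¹ ⁻¹' Uf).indicator (fun _ => (1 : ℝ≥0∞)) m)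
            * (‖((Mrho (UL g⁻¹ (S (f j))) : Lp ℂ 2 μ) : M → ℂ) m‖₊ : ℝ≥0∞) ^ 2 ∂μ :=
          tsum_congr fun g => tsum_congr fun j => stepB g (S (f j))
      _ = ∑' g : Γ, ∑' j : ℕ, ∫⁻ m, ((a g⁻¹ ⁻¹' Uf).indicator (fun _ => (1 : ℝ≥0∞)) m)
            * (‖((Mrho (S (f j)) : Lp ℂ 2 μ) : M → ℂ) m‖₊ : ℝ≥0∞) ^ 2 ∂μ :=
          tsum_congr fun g => stepC g
      _ = ∑' j : ℕ, ∑' g : Γ, ∫⁻ m, ((a g⁻¹ ⁻¹' Uf).indicator (fun _ => (1 : ℝ≥0∞)) m)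
            * (‖((Mrho (S (f j)) : Lp ℂ 2 μ) : M → ℂ) m‖₊ : ℝ≥0∞) ^ 2 ∂μ := ENNReal.tsum_comm
      _ = ∑' j : ℕ, ∫⁻ m, ((‖((Mrho (S (f j)) : Lp ℂ 2 μ) : M → ℂ) m‖₊ : ℝ≥0∞)) ^ 2 ∂μ :=
          tsum_congr fun j => stepD (Mrho (S (f j)))
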